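/- Let D be the double fan and G_D its group of homeomorphisms fixing all marked points, with the compact-open topology, acting on D by evaluation. Then for every compact Hausdorff space K with a continuous G_D-action and every continuous G_D-equivariant map i : D → K with dense image, one has i(e₀) = i(−e₀); in particular, i is not injective. -/

import Mathlib

noncomputable section

/-- The group of self-homeomorphisms of a topological space, under composition. -/
instance homeoGroup (X : Type*) [TopologicalSpace X] : Group (X ≃ₜ X) where
  mul a b := b.trans a
  one := Homeomorph.refl X
  inv := Homeomorph.symm
  mul_assoc a b c := Homeomorph.ext fun _ => rfl
  one_mul a := Homeomorph.ext fun _ => rfl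
  mul_one a := Homeomorph.ext fun _ => rfl
  inv_mul_cancel a := Homeomorph.ext fun x => a.symm_apply_apply x

/-- The real Hilbert space `ℓ²(ℕ)`. -/
abbrev DFanAmbient : Type := lp (fun _ : ℕ => ℝ) 2

/-- The `n`-th basic vector `eₙ` of `ℓ²(ℕ)`. -/
def dBasis (n : ℕ) : DFanAmbient := lp.single 2 n 1

/-- The double fan: the union over `n ≥ 1` of the straight-line segments `[e₀, eₙ]`
and `[-e₀, eₙ]` inside `ℓ²(ℕ)`, with the subspace topology. -/
def DoubleFan : Set DFanAmbient :=
  (⋃ n ∈ Set.Ici 1, segment ℝ (dBasis 0) (dBasis n)) ∪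
    ⋃ n ∈ Set.Ici 1, segment ℝ (-dBasis 0) (dBasis n)

/-- The marked points of the double fan: the points `(1 - 1/k)a + (1/k)eₙ` for
`a ∈ {e₀, -e₀}` and `k, n ≥ 1`. -/
def DMarked : Set ↥DoubleFan :=
  {x | ∃ (a : DFanAmbient) (k n : ℕ), (a = dBasis 0 ∨ a = -dBasis 0) ∧ 1 ≤ k ∧ 1 ≤ n ∧
    (x : DFanAmbient) = (1 - ((k : ℝ))⁻¹) • a + ((k : ℝ))⁻¹ • dBasis n}

/-- The group of all homeomorphisms of the double fan fixing every marked point. -/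
def DGroup : Subgroup (↥DoubleFan ≃ₜ ↥DoubleFan) where
  carrier := {g | ∀ x ∈ DMarked, g x = x}
  one_mem' := fun x _ => rfl
  mul_mem' := by
    intro a b ha hb x hx
    show a (b x) = x
    rw [hb x hx, ha x hx]
  inv_mem' := by
    intro a ha x hx
    show a.symm x = x
    conv_lhs => rw [← ha x hx]
    exact a.symm_apply_apply x

/-- The group `DGroup` carries the compact-open topology. -/
instance : TopologicalSpace DGroup :=
  TopologicalSpace.induced
    (fun g : DGroup => toContinuousMap (g : ↥DoubleFan ≃ₜ ↥DoubleFan))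
    ContinuousMap.compactOpen

/-- The base point `e₀` of the double fan. -/
def dPlus : ↥DoubleFan :=
  ⟨dBasis 0, Set.mem_union_left _
    (Set.mem_biUnion (Set.mem_Ici.2 le_rfl) (left_mem_segment ℝ (dBasis 0) (dBasis 1)))⟩

/-- The base point `-e₀` of the double fan. -/
def dMinus : ↥DoubleFan :=
  ⟨-dBasis 0, Set.mem_union_right _
    (Set.mem_biUnion (Set.mem_Ici.2 le_rfl) (left_mem_segment ℝ (-dBasis 0) (dBasis 1)))⟩

namespace DF
open Filter Set

/-- clamp to [0,1] -/
def cl (r : ℝ) : ℝ := max 0 (min 1 r)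

lemma cl_nonneg (r : ℝ) : 0 ≤ cl r := le_max_left _ _
lemma cl_le_one (r : ℝ) : cl r ≤ 1 := max_le zero_le_one (min_le_left _ _)
lemma cl_of_mem {r : ℝ} (h0 : 0 ≤ r) (h1 : r ≤ 1) : cl r = r := by
  unfold cl; rw [min_eq_right h1, max_eq_right h0]
lemma cl_of_nonpos {r : ℝ} (h : r ≤ 0) : cl r = 0 := by
  unfold cl
  rcases le_total 1 r with h1 | h1
  · rw [min_eq_left h1]; linarith
  · rw [min_eq_right h1, max_eq_left h]
lemma cl_of_one_le {r : ℝ} (h : 1 ≤ r) : cl r = 1 := by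
  unfold cl; rw [min_eq_left h, max_eq_right zero_le_one]
lemma continuous_cl : Continuous cl :=
  continuous_const.max (continuous_const.min continuous_id)

/-- tent displacement function with knots `a < m < b`, peak value `v` at `m`. -/
def tent (a m b v u : ℝ) : ℝ := v * max 0 (min ((u - a)/(m - a)) ((b - u)/(b - m)))

/-- the reparametrization `u ↦ u + tent` -/
def th (a m b v u : ℝ) : ℝ := u + tent a m b v u

lemma continuous_th (a m b v : ℝ) : Continuous (th a m b v) := by
  unfold th tent
  fun_prop

lemma th_of_le {a m b v u : ℝ} (ha : a < m) (h : u ≤ a) : th a m b v u = u := by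
  have : min ((u - a)/(m - a)) ((b - u)/(b - m)) ≤ (u - a)/(m - a) := min_le_left _ _
  have h2 : (u - a)/(m - a) ≤ 0 := div_nonpos_of_nonpos_of_nonneg (by linarith) (by linarith)
  unfold th tent
  rw [max_eq_left (by linarith)]
  ring

lemma th_of_ge {a m b v u : ℝ} (hb : m < b) (h : b ≤ u) : th a m b v u = u := by
  have : min ((u - a)/(m - a)) ((b - u)/(b - m)) ≤ (b - u)/(b - m) := min_le_right _ _
  have h2 : (b - u)/(b - m) ≤ 0 := div_nonpos_of_nonpos_of_nonneg (by linarith) (by linarith)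
  unfold th tent
  rw [max_eq_left (by linarith)]
  ring

lemma th_left {a m b v u : ℝ} (ha : a < m) (hb : m < b) (h1 : a ≤ u) (h2 : u ≤ m) :
    th a m b v u = u + v * ((u - a)/(m - a)) := by
  have hA : (0:ℝ) < m - a := by linarith
  have hB : (0:ℝ) < b - m := by linarith
  have e1 : (u - a)/(m - a) ≤ 1 := by rw [div_le_one hA]; linarith
  have e2 : (1:ℝ) ≤ (b - u)/(b - m) := by rw [le_div_iff₀ hB]; linarith
  have e0 : 0 ≤ (u - a)/(m - a) := div_nonneg (by linarith) hA.le
  unfold th tent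
  rw [min_eq_left (by linarith), max_eq_right e0]

lemma th_right {a m b v u : ℝ} (ha : a < m) (hb : m < b) (h1 : m ≤ u) (h2 : u ≤ b) :
    th a m b v u = u + v * ((b - u)/(b - m)) := by
  have hA : (0:ℝ) < m - a := by linarith
  have hB : (0:ℝ) < b - m := by linarith
  have e1 : (b - u)/(b - m) ≤ 1 := by rw [div_le_one hB]; linarith
  have e2 : (1:ℝ) ≤ (u - a)/(m - a) := by rw [le_div_iff₀ hA]; linarith
  have e0 : 0 ≤ (b - u)/(b - m) := div_nonneg (by linarith) hB.le
  unfold th tent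
  rw [min_eq_right (by linarith), max_eq_right e0]

lemma th_apply_m {a m b v : ℝ} (ha : a < m) (hb : m < b) : th a m b v m = m + v := by
  rw [th_left ha hb ha.le le_rfl, div_self (by linarith), mul_one]

/-- image bounds : on `[a,m]`, `th` lands in `[a, m+v]`. -/
lemma th_left_mem {a m b v u : ℝ} (ha : a < m) (hb : m < b)
    (hs1 : a < m + v) (h1 : a ≤ u) (h2 : u ≤ m) :
    a ≤ th a m b v u ∧ th a m b v u ≤ m + v ∧
      th a m b v u - a = (u - a) * ((m + v - a)/(m - a)) := by
  have hA : (0:ℝ) < m - a := by linarith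
  rw [th_left ha hb h1 h2]
  have key : u + v * ((u - a)/(m - a)) - a = (u - a) * ((m + v - a)/(m - a)) := by
    field_simp; ring
  have hq : 0 ≤ (m + v - a)/(m - a) := div_nonneg (by linarith) hA.le
  have h3 : (u - a)*((m + v - a)/(m - a)) ≤ (m - a)*((m + v - a)/(m - a)) :=
    mul_le_mul_of_nonneg_right (by linarith) hq
  have h4 : (m - a)*((m + v - a)/(m - a)) = m + v - a := by field_simp
  refine ⟨?_, ?_, key⟩
  · nlinarith [mul_nonneg (sub_nonneg.2 h1) hq]
  · linarith [key, h3, h4]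

lemma th_right_mem {a m b v u : ℝ} (ha : a < m) (hb : m < b)
    (hs2 : m + v < b) (h1 : m ≤ u) (h2 : u ≤ b) :
    m + v ≤ th a m b v u ∧ th a m b v u ≤ b ∧
      b - th a m b v u = (b - u) * ((b - (m + v))/(b - m)) := by
  have hB : (0:ℝ) < b - m := by linarith
  rw [th_right ha hb h1 h2]
  have key : b - (u + v * ((b - u)/(b - m))) = (b - u) * ((b - (m + v))/(b - m)) := by
    field_simp; ring
  have hq : 0 ≤ (b - (m + v))/(b - m) := div_nonneg (by linarith) hB.le
  have h3 : (b - u)*((b - (m + v))/(b - m)) ≤ (b - m)*((b - (m + v))/(b - m)) :=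
    mul_le_mul_of_nonneg_right (by linarith) hq
  have h4 : (b - m)*((b - (m + v))/(b - m)) = b - (m + v) := by field_simp
  refine ⟨?_, ?_, key⟩
  · linarith [key, h3, h4]
  · nlinarith [mul_nonneg (sub_nonneg.2 h2) hq]

/-- `th` maps `[0,1]` into itself when `[a,b] ⊆ [0,1]`. -/
lemma th_mem_Icc {a m b v u : ℝ} (ha : a < m) (hb : m < b) (hs1 : a < m + v) (hs2 : m + v < b)
    (h0 : 0 ≤ a) (h1 : b ≤ 1) (hu : u ∈ Icc (0:ℝ) 1) : th a m b v u ∈ Icc (0:ℝ) 1 := by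
  rcases le_or_gt u a with h | h
  · rw [th_of_le ha h]; exact hu
  rcases le_or_gt b u with h' | h'
  · rw [th_of_ge hb h']; exact hu
  rcases le_total u m with hm | hm
  · obtain ⟨c1, c2, -⟩ := th_left_mem ha hb hs1 h.le hm
    constructor <;> [linarith; linarith]
  · obtain ⟨c1, c2, -⟩ := th_right_mem ha hb hs2 hm h'.le
    constructor <;> [linarith; linarith]

/-- the key composition identity : `th a (m+v) b (-v)` is a left inverse of `th a m b v`. -/
lemma th_comp {a m b v : ℝ} (ha : a < m) (hb : m < b) (hs1 : a < m + v) (hs2 : m + v < b)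
    (u : ℝ) : th a (m + v) b (-v) (th a m b v u) = u := by
  have hA : (0:ℝ) < m - a := by linarith
  have hB : (0:ℝ) < b - m := by linarith
  have hA' : (0:ℝ) < m + v - a := by linarith
  have hB' : (0:ℝ) < b - (m + v) := by linarith
  rcases le_or_gt u a with h | h
  · rw [th_of_le ha h, th_of_le hs1 h]
  rcases le_or_gt b u with h' | h'
  · rw [th_of_ge hb h', th_of_ge hs2 h']
  rcases le_total u m with hm | hm
  · obtain ⟨c1, c2, c3⟩ := th_left_mem ha hb hs1 h.le hm
    rw [th_left hs1 hs2 c1 c2]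
    have hwval : th a m b v u = a + (u - a) * ((m + v - a)/(m - a)) := by linarith
    rw [hwval]
    field_simp
    ring
  · obtain ⟨c1, c2, c3⟩ := th_right_mem ha hb hs2 hm h'.le
    rw [th_right hs1 hs2 c1 c2]
    have hwval : th a m b v u = b - (b - u) * ((b - (m + v))/(b - m)) := by linarith
    rw [hwval]
    field_simp
    ring

end DF

namespace DF
open Filter Set

lemma coord_lip (n : ℕ) : LipschitzWith 1 (fun x : DFanAmbient => x n) := by
  apply LipschitzWith.of_dist_le_mul
  intro x y
  rw [NNReal.coe_one, one_mul, Real.dist_eq, dist_eq_norm]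
  have := lp.norm_apply_le_norm (by norm_num : (2 : ENNReal) ≠ 0) (x - y) n
  simpa [lp.coeFn_sub, Pi.sub_apply] using this

lemma coord_continuous (n : ℕ) : Continuous fun x : DFanAmbient => x n :=
  (coord_lip n).continuous

lemma dBasis_apply_self (n : ℕ) : (dBasis n) n = 1 := lp.single_apply_self 2 n 1

lemma dBasis_apply_ne {n j : ℕ} (h : j ≠ n) : (dBasis n) j = 0 := lp.single_apply_ne 2 n 1 h

lemma norm_dBasis (n : ℕ) : ‖dBasis n‖ = 1 := by
  have := lp.norm_single (E := fun _ : ℕ => ℝ) (p := 2) (by norm_num) n (1:ℝ)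
  exact this.trans norm_one

/-- the parametrized point `(1-t)·(ε e₀) + t·e_m`. -/
def pt (ε : ℝ) (m : ℕ) (t : ℝ) : DFanAmbient := (1 - t) • (ε • dBasis 0) + t • dBasis m

lemma continuous_pt (ε : ℝ) (m : ℕ) : Continuous fun t : ℝ => pt ε m t := by
  unfold pt; fun_prop

lemma pt_apply (ε : ℝ) (m : ℕ) (t : ℝ) (j : ℕ) :
    (pt ε m t) j = (1 - t) * (ε * dBasis 0 j) + t * dBasis m j := by
  unfold pt
  rw [lp.coeFn_add, Pi.add_apply, lp.coeFn_smul, lp.coeFn_smul, Pi.smul_apply, Pi.smul_apply,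
    lp.coeFn_smul, Pi.smul_apply]
  simp [smul_eq_mul]

lemma pt_apply_zero {m : ℕ} (hm : 1 ≤ m) (ε t : ℝ) : (pt ε m t) 0 = ε * (1 - t) := by
  rw [pt_apply, dBasis_apply_self, dBasis_apply_ne (by omega : (0:ℕ) ≠ m)]
  ring

lemma pt_apply_self {m : ℕ} (hm : 1 ≤ m) (ε t : ℝ) : (pt ε m t) m = t := by
  rw [pt_apply, dBasis_apply_self, dBasis_apply_ne (by omega : m ≠ 0)]
  ring

lemma pt_apply_other {m j : ℕ} (h0 : j ≠ 0) (hm : j ≠ m) (ε t : ℝ) : (pt ε m t) j = 0 := by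
  rw [pt_apply, dBasis_apply_ne h0, dBasis_apply_ne hm]
  ring

lemma pt_one (ε : ℝ) (m : ℕ) : pt ε m 1 = dBasis m := by
  unfold pt; rw [sub_self, zero_smul, one_smul, zero_add]

lemma pt_zero (ε : ℝ) (m : ℕ) : pt ε m 0 = ε • dBasis 0 := by
  unfold pt; rw [sub_zero, one_smul, zero_smul, add_zero]

lemma pt_mem {ε : ℝ} (hε : ε = 1 ∨ ε = -1) {m : ℕ} (hm : 1 ≤ m) {t : ℝ}
    (ht : t ∈ Icc (0:ℝ) 1) : pt ε m t ∈ DoubleFan := by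
  rcases hε with rfl | rfl
  · apply Set.mem_union_left
    apply Set.mem_biUnion (Set.mem_Ici.2 hm)
    rw [segment_eq_image]
    exact ⟨t, ht, by unfold pt; rw [one_smul]⟩
  · apply Set.mem_union_right
    apply Set.mem_biUnion (Set.mem_Ici.2 hm)
    rw [segment_eq_image]
    exact ⟨t, ht, by unfold pt; rw [neg_one_smul]⟩

lemma mem_doubleFan (x : DFanAmbient) (hx : x ∈ DoubleFan) :
    ∃ (ε : ℝ) (m : ℕ) (t : ℝ), (ε = 1 ∨ ε = -1) ∧ 1 ≤ m ∧ t ∈ Icc (0:ℝ) 1 ∧ x = pt ε m t := by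
  rcases hx with h | h <;> rw [Set.mem_iUnion₂] at h <;> obtain ⟨m, hm, hseg⟩ := h <;>
    rw [segment_eq_image] at hseg <;> obtain ⟨t, ht, rfl⟩ := hseg
  · exact ⟨1, m, t, Or.inl rfl, hm, ht, by unfold pt; rw [one_smul]⟩
  · exact ⟨-1, m, t, Or.inr rfl, hm, ht, by unfold pt; rw [neg_one_smul]⟩

lemma norm_pt_sub_base {ε : ℝ} (hε : ε = 1 ∨ ε = -1) (m : ℕ) {t : ℝ} (ht : 0 ≤ t) :
    ‖pt ε m t - ε • dBasis 0‖ ≤ 2 * t := by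
  have : pt ε m t - ε • dBasis 0 = t • (dBasis m - ε • dBasis 0) := by
    unfold pt; module
  rw [this, norm_smul]
  have h1 : ‖dBasis m - ε • dBasis 0‖ ≤ 2 := by
    refine (norm_sub_le _ _).trans ?_
    rw [norm_smul, norm_dBasis, norm_dBasis]
    rcases hε with rfl | rfl <;> norm_num
  have : ‖t‖ = t := by rw [Real.norm_eq_abs, abs_of_nonneg ht]
  rw [this]
  nlinarith

end DF

namespace DF
open Filter Set Classical

lemma tent_of_le {a m b v u : ℝ} (ha : a < m) (h : u ≤ a) : tent a m b v u = 0 := by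
  have h1 := th_of_le (b := b) (v := v) ha h
  unfold th at h1; linarith

lemma tent_of_ge {a m b v u : ℝ} (hb : m < b) (h : b ≤ u) : tent a m b v u = 0 := by
  have h1 := th_of_ge (a := a) (v := v) hb h
  unfold th at h1; linarith

lemma continuous_tent (a m b v : ℝ) : Continuous (tent a m b v) := by
  unfold tent
  exact continuous_const.mul (continuous_const.max
    (((continuous_id.sub continuous_const).div_const _).min
      ((continuous_const.sub continuous_id).div_const _)))

/-- the ambient mover map -/
def Fmap (ε : ℝ) (n : ℕ) (a m b v : ℝ) (x : DFanAmbient) : DFanAmbient :=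
  x + (tent a m b v (x n) * cl ((ε * x 0) / (1 - b))) • (dBasis n - ε • dBasis 0)

lemma continuous_Fmap (ε : ℝ) (n : ℕ) (a m b v : ℝ) : Continuous (Fmap ε n a m b v) := by
  unfold Fmap
  exact continuous_id.add ((((continuous_tent a m b v).comp (coord_continuous n)).mul
    (continuous_cl.comp ((continuous_const.mul (coord_continuous 0)).div_const _))).smul
      continuous_const)

/-- hypotheses for the mover parameters -/
structure MoverHyp (ε : ℝ) (n : ℕ) (a m b v : ℝ) : Prop where
  hε : ε = 1 ∨ ε = -1
  hn : 1 ≤ n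
  ha : 0 < a
  ham : a < m
  hmb : m < b
  has : a < m + v
  hsb : m + v < b
  hb1 : b < 1
  hrec : ∀ j : ℕ, 1 ≤ j → (j:ℝ)⁻¹ ≤ a ∨ b ≤ (j:ℝ)⁻¹

lemma MoverHyp.symm {ε n a m b v} (H : MoverHyp ε n a m b v) :
    MoverHyp ε n a (m + v) b (-v) where
  hε := H.hε
  hn := H.hn
  ha := H.ha
  ham := H.has
  hmb := H.hsb
  has := by have := H.ham; linarith
  hsb := by have := H.hmb; linarith
  hb1 := H.hb1
  hrec := H.hrec

lemma sq_eq_one {ε : ℝ} (hε : ε = 1 ∨ ε = -1) : ε * ε = 1 := by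
  rcases hε with rfl | rfl <;> norm_num

lemma eps_ne_zero {ε : ℝ} (hε : ε = 1 ∨ ε = -1) : ε ≠ 0 := by
  rcases hε with rfl | rfl <;> norm_num

/-- the mover fixes anything whose `n`-th coordinate is at most `a`. -/
lemma Fmap_of_coord_le {ε n a m b v} (H : MoverHyp ε n a m b v) {x : DFanAmbient}
    (h : x n ≤ a) : Fmap ε n a m b v x = x := by
  unfold Fmap
  rw [tent_of_le H.ham h, zero_mul, zero_smul, add_zero]

/-- action on the proper arm -/
lemma Fmap_pt_same {ε n a m b v} (H : MoverHyp ε n a m b v) {u : ℝ} (hu : u ∈ Icc (0:ℝ) 1) :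
    Fmap ε n a m b v (pt ε n u) = pt ε n (th a m b v u) := by
  have hxn : (pt ε n u) n = u := pt_apply_self H.hn ε u
  have hx0 : (pt ε n u) 0 = ε * (1 - u) := pt_apply_zero H.hn ε u
  unfold Fmap
  rw [hxn, hx0]
  rcases le_or_gt u b with hub | hub
  · have harg : (1:ℝ) ≤ ε * (ε * (1 - u)) / (1 - b) := by
      rw [← mul_assoc, sq_eq_one H.hε, one_mul]
      rw [le_div_iff₀ (by have := H.hb1; linarith)]
      linarith
    rw [cl_of_one_le harg, mul_one]
    have h2 : th a m b v u = u + tent a m b v u := rfl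
    rw [h2]
    unfold pt
    module
  · rw [tent_of_ge H.hmb hub.le, zero_mul, zero_smul, add_zero,
      th_of_ge H.hmb hub.le]

/-- other segments are fixed -/
lemma Fmap_pt_other {ε n a m b v} (H : MoverHyp ε n a m b v) {ε' : ℝ} {m' : ℕ}
    (hm' : 1 ≤ m') (hne : m' ≠ n) (u : ℝ) :
    Fmap ε n a m b v (pt ε' m' u) = pt ε' m' u := by
  apply Fmap_of_coord_le H
  rw [pt_apply_other (by have := H.hn; omega) (Ne.symm hne)]
  exact H.ha.le

/-- the opposite arm is fixed -/
lemma Fmap_pt_opp {ε n a m b v} (H : MoverHyp ε n a m b v) {u : ℝ} (hu : u ∈ Icc (0:ℝ) 1) :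
    Fmap ε n a m b v (pt (-ε) n u) = pt (-ε) n u := by
  have hx0 : (pt (-ε) n u) 0 = -ε * (1 - u) := pt_apply_zero H.hn (-ε) u
  unfold Fmap
  rw [hx0]
  have harg : ε * (-ε * (1 - u)) / (1 - b) ≤ 0 := by
    apply div_nonpos_of_nonpos_of_nonneg
    · have h2 : ε * (-ε * (1 - u)) = -(ε * ε) * (1 - u) := by ring
      rw [h2, sq_eq_one H.hε]
      have := hu.2; linarith
    · have := H.hb1; linarith
  rw [cl_of_nonpos harg, mul_zero, zero_smul, add_zero]

/-- full description of `Fmap` on fan points. -/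
lemma Fmap_pt_eq {ε n a m b v} (H : MoverHyp ε n a m b v) {ε' : ℝ}
    (hε' : ε' = 1 ∨ ε' = -1) {m' : ℕ} (hm' : 1 ≤ m') {u : ℝ} (hu : u ∈ Icc (0:ℝ) 1) :
    Fmap ε n a m b v (pt ε' m' u) =
      if ε' = ε ∧ m' = n then pt ε n (th a m b v u) else pt ε' m' u := by
  rcases eq_or_ne m' n with rfl | hne
  · have hcase : ε' = ε ∨ ε' = -ε := by
      rcases hε' with rfl | rfl <;> rcases H.hε with h | h
      · exact Or.inl h.symm
      · exact Or.inr (by rw [h]; try norm_num)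
      · exact Or.inr (by rw [h]; try norm_num)
      · exact Or.inl h.symm
    rcases hcase with rfl | h
    · rw [if_pos ⟨rfl, rfl⟩, Fmap_pt_same H hu]
    · have hne2 : ¬(ε' = ε ∧ m' = m') := by
        rintro ⟨he, -⟩
        rw [h] at he
        exact eps_ne_zero H.hε (by linarith)
      rw [if_neg hne2, h, Fmap_pt_opp H hu]
  · rw [if_neg (fun hc => hne hc.2), Fmap_pt_other H hm' hne]

/-- `Fmap` preserves the double fan. -/
lemma Fmap_mem {ε n a m b v} (H : MoverHyp ε n a m b v) {x : DFanAmbient}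
    (hx : x ∈ DoubleFan) : Fmap ε n a m b v x ∈ DoubleFan := by
  obtain ⟨ε', m', u, hε', hm', hu, rfl⟩ := mem_doubleFan x hx
  rw [Fmap_pt_eq H hε' hm' hu]
  split
  · exact pt_mem H.hε H.hn (th_mem_Icc H.ham H.hmb H.has H.hsb H.ha.le H.hb1.le hu)
  · exact pt_mem hε' hm' hu

/-- composition identity on the fan -/
lemma Fmap_comp {ε n a m b v} (H : MoverHyp ε n a m b v) {x : DFanAmbient}
    (hx : x ∈ DoubleFan) :
    Fmap ε n a (m + v) b (-v) (Fmap ε n a m b v x) = x := by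
  obtain ⟨ε', m', u, hε', hm', hu, rfl⟩ := mem_doubleFan x hx
  rw [Fmap_pt_eq H hε' hm' hu]
  split
  · rename_i hc
    rw [Fmap_pt_eq H.symm H.hε H.hn
        (th_mem_Icc H.ham H.hmb H.has H.hsb H.ha.le H.hb1.le hu),
      if_pos ⟨rfl, rfl⟩, th_comp H.ham H.hmb H.has H.hsb, hc.1, hc.2]
  · rename_i hc
    rw [Fmap_pt_eq H.symm hε' hm' hu, if_neg hc]

end DF

namespace DF
open Filter Set

/-- the mover as a homeomorphism of the double fan -/
def moverHomeo {ε n a m b v} (H : MoverHyp ε n a m b v) : ↥DoubleFan ≃ₜ ↥DoubleFan where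
  toFun x := ⟨Fmap ε n a m b v x, Fmap_mem H x.2⟩
  invFun x := ⟨Fmap ε n a (m + v) b (-v) x, Fmap_mem H.symm x.2⟩
  left_inv x := Subtype.ext (Fmap_comp H x.2)
  right_inv x := by
    have h := Fmap_comp H.symm x.2
    rw [add_neg_cancel_right, neg_neg] at h
    exact Subtype.ext h
  continuous_toFun :=
    ((continuous_Fmap ε n a m b v).comp continuous_subtype_val).subtype_mk _
  continuous_invFun :=
    ((continuous_Fmap ε n a (m + v) b (-v)).comp continuous_subtype_val).subtype_mk _

lemma marked_eq_pt {x : ↥DoubleFan} (hx : x ∈ DMarked) :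
    ∃ (ε' : ℝ) (k' n' : ℕ), (ε' = 1 ∨ ε' = -1) ∧ 1 ≤ k' ∧ 1 ≤ n' ∧
      (x : DFanAmbient) = pt ε' n' ((k' : ℝ))⁻¹ := by
  obtain ⟨aa, k', n', haa, hk', hn', hxeq⟩ := hx
  rcases haa with rfl | rfl
  · exact ⟨1, k', n', Or.inl rfl, hk', hn', by rw [hxeq]; unfold pt; rw [one_smul]⟩
  · exact ⟨-1, k', n', Or.inr rfl, hk', hn', by rw [hxeq]; unfold pt; rw [neg_one_smul]⟩

lemma inv_mem_Icc {k' : ℕ} (hk' : 1 ≤ k') : ((k' : ℝ))⁻¹ ∈ Icc (0:ℝ) 1 := by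
  have h1 : (1:ℝ) ≤ (k' : ℝ) := by exact_mod_cast hk'
  constructor
  · positivity
  · rw [inv_le_one_iff₀]; right; exact h1

lemma moverHomeo_mem_DGroup {ε n a m b v} (H : MoverHyp ε n a m b v) :
    moverHomeo H ∈ DGroup := by
  intro x hx
  obtain ⟨ε', k', n', hε', hk', hn', hxeq⟩ := marked_eq_pt hx
  apply Subtype.ext
  show Fmap ε n a m b v (x : DFanAmbient) = (x : DFanAmbient)
  rw [hxeq, Fmap_pt_eq H hε' hn' (inv_mem_Icc hk')]
  split
  · rename_i hc
    have hfix : th a m b v ((k' : ℝ))⁻¹ = ((k' : ℝ))⁻¹ := by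
      rcases H.hrec k' hk' with h | h
      · exact th_of_le H.ham h
      · exact th_of_ge H.hmb h
    rw [hfix, hc.1, hc.2]
  · rfl

/-- the mover as an element of `DGroup` -/
def mover {ε n a m b v} (H : MoverHyp ε n a m b v) : DGroup :=
  ⟨moverHomeo H, moverHomeo_mem_DGroup H⟩

lemma mover_apply {ε n a m b v} (H : MoverHyp ε n a m b v)
    (hmem : pt ε n m ∈ DoubleFan) (hm : m ∈ Icc (0:ℝ) 1) :
    (((mover H : DGroup) : ↥DoubleFan ≃ₜ ↥DoubleFan) ⟨pt ε n m, hmem⟩ : DFanAmbient) =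
      pt ε n (m + v) := by
  show Fmap ε n a m b v (pt ε n m) = pt ε n (m + v)
  rw [Fmap_pt_same H hm, th_apply_m H.ham H.hmb]

lemma mover_fix {ε n a m b v} (H : MoverHyp ε n a m b v) {x : ↥DoubleFan}
    (h : (x : DFanAmbient) n ≤ a) :
    ((mover H : DGroup) : ↥DoubleFan ≃ₜ ↥DoubleFan) x = x :=
  Subtype.ext (Fmap_of_coord_le H h)

/-- parameters for a mover inside the open interval `(1/(k+1), 1/k)` -/
lemma moverHyp_of_Ioo {ε : ℝ} (hε : ε = 1 ∨ ε = -1) {k : ℕ} (hk : 1 ≤ k) {t s : ℝ}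
    (ht : t ∈ Ioo (((k : ℝ) + 1)⁻¹) ((k : ℝ))⁻¹)
    (hs : s ∈ Ioo (((k : ℝ) + 1)⁻¹) ((k : ℝ))⁻¹) (j : ℕ) :
    MoverHyp ε (j + 1) ((((k : ℝ) + 1)⁻¹ + min t s) / 2) t
      ((max t s + ((k : ℝ))⁻¹) / 2) (s - t) := by
  have hk1 : (1:ℝ) ≤ (k : ℝ) := by exact_mod_cast hk
  have hkpos : (0:ℝ) < (k : ℝ) := by linarith
  have hik : (0:ℝ) < ((k : ℝ))⁻¹ := by positivity
  have hik1 : (0:ℝ) < ((k : ℝ) + 1)⁻¹ := by positivity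
  have hikle : ((k : ℝ))⁻¹ ≤ 1 := by
    rw [inv_le_one_iff₀]; right; exact hk1
  have hmin : ((k : ℝ) + 1)⁻¹ < min t s := lt_min ht.1 hs.1
  have hmax : max t s < ((k : ℝ))⁻¹ := max_lt ht.2 hs.2
  have hminle : min t s ≤ t := min_le_left _ _
  have hmins : min t s ≤ s := min_le_right _ _
  have htmax : t ≤ max t s := le_max_left _ _
  have hsmax : s ≤ max t s := le_max_right _ _
  refine ⟨hε, by omega, by linarith, by linarith, by linarith, by linarith, by linarith,
    by linarith, ?_⟩
  intro j' hj'
  have hj'pos : (0:ℝ) < (j' : ℝ) := by exact_mod_cast hj'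
  rcases le_or_gt (j' : ℕ) k with h | h
  · right
    have : ((k : ℝ))⁻¹ ≤ ((j' : ℝ))⁻¹ := by
      apply inv_anti₀ hj'pos
      exact_mod_cast h
    linarith
  · left
    have hcast : (k : ℝ) + 1 ≤ (j' : ℝ) := by exact_mod_cast h
    have : ((j' : ℝ))⁻¹ ≤ ((k : ℝ) + 1)⁻¹ := by
      apply inv_anti₀ (by positivity)
      exact hcast
    linarith

end DF

namespace DF
open Filter Set Topology Metric

/-- coordinates of an `ℓ²` element tend to `0`. -/
lemma coord_tendsto_zero (y : DFanAmbient) : Tendsto (fun i : ℕ => ‖y i‖) atTop (𝓝 0) := by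
  have hmem := lp.memℓp y
  have hsum : Summable fun i : ℕ => ‖y i‖ ^ (2 : ENNReal).toReal :=
    (memℓp_gen_iff (by norm_num)).1 hmem
  have h2 : Tendsto (fun i : ℕ => ‖y i‖ ^ (2 : ENNReal).toReal) atTop (𝓝 0) :=
    hsum.tendsto_atTop_zero
  have h3 : Tendsto (fun i : ℕ => Real.sqrt (‖y i‖ ^ (2 : ENNReal).toReal)) atTop (𝓝 0) := by
    have := (Real.continuous_sqrt.tendsto 0).comp h2
    simpa [Function.comp_def] using this
  convert h3 using 2 with i
  rw [show (2 : ENNReal).toReal = 2 by norm_num]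
  rw [Real.rpow_two, Real.sqrt_sq (norm_nonneg _)]

/-- on a compact subset of the fan, high coordinates are uniformly small. -/
lemma eventually_coord_small {C : Set ↥DoubleFan} (hC : IsCompact C) {δ : ℝ} (hδ : 0 < δ) :
    ∀ᶠ i : ℕ in atTop, ∀ x ∈ C, (x : DFanAmbient) i ≤ δ := by
  have hC' : IsCompact (Subtype.val '' C) := hC.image continuous_subtype_val
  obtain ⟨t, -, htfin, hcov⟩ := hC'.finite_cover_balls (half_pos hδ)
  have hev : ∀ y ∈ t, ∀ᶠ i : ℕ in atTop, ‖(y : DFanAmbient) i‖ < δ / 2 := fun y _ =>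
    (coord_tendsto_zero y).eventually (Filter.Tendsto.eventually_lt_const (half_pos hδ) tendsto_id)
  have hall : ∀ᶠ i : ℕ in atTop, ∀ y ∈ t, ‖(y : DFanAmbient) i‖ < δ / 2 :=
    (htfin.eventually_all).2 hev
  filter_upwards [hall] with i hi x hx
  obtain ⟨y, hy, hxy⟩ := Set.mem_iUnion₂.1 (hcov ⟨x, hx, rfl⟩)
  have h1 : dist ((x : DFanAmbient) i) (y i) ≤ dist (x : DFanAmbient) y := by
    have := (coord_lip i).dist_le_mul (x : DFanAmbient) y
    simpa using this
  have h2 : dist (x : DFanAmbient) y < δ / 2 := mem_ball.1 hxy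
  have h3 := hi y hy
  rw [Real.norm_eq_abs] at h3
  rw [Real.dist_eq] at h1
  have h4 := abs_sub_abs_le_abs_sub ((x : DFanAmbient) i) (y i)
  calc (x : DFanAmbient) i ≤ |(x : DFanAmbient) i| := le_abs_self _
    _ ≤ δ := by linarith

/-- the embedding of `DGroup` into continuous maps. -/
def ι (g : DGroup) : C(↥DoubleFan, ↥DoubleFan) :=
  toContinuousMap (g : ↥DoubleFan ≃ₜ ↥DoubleFan)

lemma tendsto_one_of_eventually_fix (g : ℕ → DGroup)
    (hfix : ∀ (C : Set ↥DoubleFan), IsCompact C →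
      ∀ᶠ j : ℕ in atTop, ∀ x ∈ C, ((g j : ↥DoubleFan ≃ₜ ↥DoubleFan)) x = x) :
    Tendsto g atTop (𝓝 (1 : DGroup)) := by
  have hnhds : 𝓝 (1 : DGroup) = Filter.comap ι (𝓝 (ι 1)) := nhds_induced ι 1
  rw [hnhds, tendsto_comap_iff]
  rw [ContinuousMap.tendsto_iff_forall_isCompact_tendstoUniformlyOn]
  intro C hC
  intro u hu
  filter_upwards [hfix C hC] with j hj x hx
  have heq2 : ((ι ∘ g) j) x = (ι 1) x := hj x hx
  rw [heq2]
  exact refl_mem_uniformity hu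

end DF

namespace DF
open Filter Set Topology Uniformity UniformSpace

lemma equicontinuity {K : Type*} [UniformSpace K] [CompactSpace K]
    [MulAction DGroup K] [ContinuousSMul DGroup K] {W : Set (K × K)} (hW : W ∈ 𝓤 K) :
    ∃ O ∈ 𝓝 (1 : DGroup), ∀ g ∈ O, ∀ κ : K, (κ, g • κ) ∈ W := by
  obtain ⟨V, hV, hVW⟩ := comp_mem_uniformity_sets hW
  have hV' : SetRel.symmetrize V ∈ 𝓤 K := symmetrize_mem_uniformity hV
  have hV'symm : (SetRel.symmetrize V).IsSymm := inferInstance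
  have hV'V : SetRel.symmetrize V ⊆ V := SetRel.symmetrize_subset_self
  have hpoint : ∀ κ : K, ∃ O ∈ 𝓝 (1 : DGroup), ∃ N ∈ 𝓝 κ,
      ∀ g ∈ O, ∀ x ∈ N, (κ, g • x) ∈ SetRel.symmetrize V := by
    intro κ
    have hcont : ContinuousAt (fun p : DGroup × K => p.1 • p.2) (1, κ) :=
      continuous_smul.continuousAt
    have hball : UniformSpace.ball κ (SetRel.symmetrize V) ∈ 𝓝 ((fun p : DGroup × K => p.1 • p.2) (1, κ)) := by
      show _ ∈ 𝓝 ((1 : DGroup) • κ)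
      rw [one_smul]
      exact UniformSpace.ball_mem_nhds κ hV'
    have hpre := hcont hball
    rw [nhds_prod_eq] at hpre
    obtain ⟨O, hO, N, hN, hON⟩ := Filter.mem_prod_iff.1 hpre
    refine ⟨O, hO, N, hN, fun g hg x hx => ?_⟩
    have : (g, x) ∈ O ×ˢ N := Set.mk_mem_prod hg hx
    exact hON this
  choose O hO N hN hprop using hpoint
  obtain ⟨s, -, hs⟩ := isCompact_univ.elim_nhds_subcover N (fun κ _ => hN κ)
  refine ⟨⋂ κ ∈ s, O κ, (biInter_mem s.finite_toSet).2 fun κ _ => hO κ, ?_⟩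
  intro g hg κ'
  have hκ'cov : κ' ∈ ⋃ κ ∈ s, N κ := hs (Set.mem_univ κ')
  obtain ⟨κ, hκs, hκ'⟩ := Set.mem_iUnion₂.1 hκ'cov
  have hgO : g ∈ O κ := by
    have := Set.mem_iInter₂.1 hg κ hκs
    exact this
  have h1 : (κ, g • κ') ∈ SetRel.symmetrize V := hprop κ g hgO κ' hκ'
  have h2 : (κ, κ') ∈ SetRel.symmetrize V := by
    have h3 := hprop κ 1 (mem_of_mem_nhds (hO κ)) κ' hκ'
    rwa [one_smul] at h3
  exact hVW (SetRel.prodMk_mem_comp (hV'V (SetRel.symm _ h2)) (hV'V h1))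

end DF

namespace DF
open Filter Set Topology Uniformity UniformSpace

lemma inv_succ_lt_inv {k : ℕ} (hk : 1 ≤ k) : ((k : ℝ) + 1)⁻¹ < ((k : ℝ))⁻¹ := by
  have hkpos : (0:ℝ) < (k : ℝ) := by exact_mod_cast hk
  apply inv_strictAnti₀ hkpos
  linarith

lemma inv_succ_pos (k : ℕ) : (0:ℝ) < ((k : ℝ) + 1)⁻¹ := by positivity

lemma inv_le_one' {k : ℕ} (hk : 1 ≤ k) : ((k : ℝ))⁻¹ ≤ 1 := by
  have h : (1:ℝ) ≤ (k : ℝ) := by exact_mod_cast hk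
  rw [inv_le_one_iff₀]; right; exact h

/-- the end point `e_{j+1}` of the `j`-th segment, as an element of the fan. -/
def eSeg (j : ℕ) : ↥DoubleFan :=
  ⟨dBasis (j + 1), by
    rw [← pt_one 1 (j + 1)]
    exact pt_mem (Or.inl rfl) (by omega) ⟨zero_le_one, le_rfl⟩⟩

/-- the base point `ε·e₀`. -/
def base (ε : ℝ) (hε : ε = 1 ∨ ε = -1) : ↥DoubleFan :=
  ⟨ε • dBasis 0, by
    rw [← pt_zero ε 1]
    exact pt_mem hε le_rfl ⟨le_rfl, zero_le_one⟩⟩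

lemma key {K : Type*} [UniformSpace K] [CompactSpace K] [T2Space K]
    [MulAction DGroup K] [ContinuousSMul DGroup K]
    (i : ↥DoubleFan → K) (hi : Continuous i)
    (heq : ∀ (g : DGroup) (x : ↥DoubleFan),
      i ((g : ↥DoubleFan ≃ₜ ↥DoubleFan) x) = g • i x)
    {ε : ℝ} (hε : ε = 1 ∨ ε = -1) :
    Tendsto (fun j : ℕ => i (eSeg j)) (Ultrafilter.of (atTop : Filter ℕ) : Filter ℕ)
      (𝓝 (i (base ε hε))) := by
  set U := Ultrafilter.of (atTop : Filter ℕ) with hU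
  have hUle : (U : Filter ℕ) ≤ atTop := Ultrafilter.of_le _
  have hmem : ∀ (j : ℕ) (t : ℝ), t ∈ Icc (0:ℝ) 1 → pt ε (j+1) t ∈ DoubleFan :=
    fun j t ht => pt_mem hε (by omega) ht
  set P : ℝ → ℕ → ↥DoubleFan :=
    (fun t j => ⟨pt ε (j+1) (cl t), hmem j _ ⟨cl_nonneg t, cl_le_one t⟩⟩) with hP
  have hPval : ∀ (t : ℝ), 0 ≤ t → t ≤ 1 → ∀ j, (P t j : DFanAmbient) = pt ε (j+1) t := by
    intro t h0 h1 j
    show pt ε (j+1) (cl t) = pt ε (j+1) t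
    rw [cl_of_mem h0 h1]
  -- ultralimits exist
  have hφex : ∀ t : ℝ, ∃ y : K, Tendsto (fun j => i (P t j)) (U : Filter ℕ) (𝓝 y) := by
    intro t
    obtain ⟨y, -, hy⟩ := isCompact_univ.ultrafilter_le_nhds (U.map fun j => i (P t j))
      (by simp)
    refine ⟨y, ?_⟩
    show Filter.map (fun j => i (P t j)) (U : Filter ℕ) ≤ 𝓝 y
    rwa [← Ultrafilter.coe_map]
  choose φ hφ using hφex
  -- Step B : interval crossing
  have stepB : ∀ (k : ℕ), 1 ≤ k → ∀ t ∈ Ioo (((k : ℝ) + 1)⁻¹) ((k : ℝ))⁻¹,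
      ∀ r ∈ Icc (((k : ℝ) + 1)⁻¹) ((k : ℝ))⁻¹, φ t = φ r := by
    intro k hk t ht r hr
    have hik1 := inv_succ_pos k
    have hikk := inv_succ_lt_inv hk
    have hik_le1 := inv_le_one' hk
    have ht0 : (0:ℝ) ≤ t := le_of_lt (lt_trans hik1 ht.1)
    have ht1 : t ≤ 1 := le_trans ht.2.le hik_le1
    apply eq_of_uniformity_basis uniformity_hasBasis_closed
    rintro W ⟨hW, hWc⟩
    obtain ⟨V, hV, hVW⟩ := comp_mem_uniformity_sets hW
    have hV' : SetRel.symmetrize V ∈ 𝓤 K := symmetrize_mem_uniformity hV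
    have hV'symm : (SetRel.symmetrize V).IsSymm := inferInstance
    have hV'V : SetRel.symmetrize V ⊆ V := SetRel.symmetrize_subset_self
    obtain ⟨O, hOnhds, hOprop⟩ := equicontinuity hV'
    -- choose s_j close to r
    have hchoose : ∀ j : ℕ, ∃ s, s ∈ Ioo (((k : ℝ) + 1)⁻¹) ((k : ℝ))⁻¹ ∧
        (i (P r j), i (P s j)) ∈ SetRel.symmetrize V := by
      intro j
      have hc : ContinuousAt (fun s : ℝ => i (P s j)) r := by
        apply Continuous.continuousAt
        exact hi.comp (Continuous.subtype_mk ((continuous_pt ε (j+1)).comp continuous_cl) _)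
      have hpre : (fun s : ℝ => i (P s j)) ⁻¹'
          (UniformSpace.ball (i (P r j)) (SetRel.symmetrize V)) ∈ 𝓝 r :=
        hc (UniformSpace.ball_mem_nhds _ hV')
      have hradh : r ∈ closure (Ioo (((k : ℝ) + 1)⁻¹) ((k : ℝ))⁻¹) := by
        rw [closure_Ioo (ne_of_lt hikk)]
        exact hr
      obtain ⟨s, hs1, hs2⟩ := mem_closure_iff_nhds.1 hradh _ hpre
      exact ⟨s, hs2, hs1⟩
    choose sfun hsIoo hsV using hchoose
    -- the movers tend to the identity
    have hg1 : Tendsto (fun j => mover (moverHyp_of_Ioo hε hk ht (hsIoo j) j)) atTop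
        (𝓝 (1 : DGroup)) := by
      apply tendsto_one_of_eventually_fix
      intro C hC
      have hsmall := eventually_coord_small hC hik1
      have hsh : ∀ᶠ j : ℕ in atTop, ∀ x ∈ C, (x : DFanAmbient) (j+1) ≤ ((k : ℝ) + 1)⁻¹ :=
        (tendsto_add_atTop_nat 1).eventually hsmall
      filter_upwards [hsh] with j hj x hx
      apply mover_fix
      have hb1 : ((k : ℝ) + 1)⁻¹ < (((k : ℝ) + 1)⁻¹ + min t (sfun j)) / 2 := by
        have := lt_min ht.1 (hsIoo j).1
        linarith
      linarith [hj x hx]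
    have hgO : ∀ᶠ j in (U : Filter ℕ),
        mover (moverHyp_of_Ioo hε hk ht (hsIoo j) j) ∈ O := hUle (hg1 hOnhds)
    -- entourage estimate
    have hWmem : ∀ᶠ j in (U : Filter ℕ), (i (P t j), i (P r j)) ∈ W := by
      filter_upwards [hgO] with j hjO
      have h1 : (i (P t j),
          (mover (moverHyp_of_Ioo hε hk ht (hsIoo j) j)) • (i (P t j))) ∈ SetRel.symmetrize V :=
        hOprop _ hjO (i (P t j))
      have h2 : (mover (moverHyp_of_Ioo hε hk ht (hsIoo j) j)) • (i (P t j)) =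
          i (P (sfun j) j) := by
        rw [← heq _ (P t j)]
        congr 1
        have hPt : P t j = ⟨pt ε (j+1) t, hmem j t ⟨ht0, ht1⟩⟩ :=
          Subtype.ext (hPval t ht0 ht1 j)
        rw [hPt]
        apply Subtype.ext
        rw [mover_apply (moverHyp_of_Ioo hε hk ht (hsIoo j) j) (hmem j t ⟨ht0, ht1⟩)
          ⟨ht0, ht1⟩]
        have hsv : t + (sfun j - t) = sfun j := by ring
        rw [hsv, hPval (sfun j) (le_of_lt (lt_trans hik1 (hsIoo j).1))
          (le_trans (hsIoo j).2.le hik_le1) j]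
      rw [h2] at h1
      exact hVW (SetRel.prodMk_mem_comp (hV'V h1) (hV'V (SetRel.symm _ (hsV j))))
    have hlim : Tendsto (fun j => (i (P t j), i (P r j))) (U : Filter ℕ) (𝓝 (φ t, φ r)) :=
      (hφ t).prodMk_nhds (hφ r)
    exact hWc.mem_of_tendsto hlim hWmem
  -- chain : φ (1/k) = φ 1
  have chain : ∀ k : ℕ, 1 ≤ k → φ (((k : ℕ) : ℝ))⁻¹ = φ 1 := by
    intro k
    induction k with
    | zero => intro h; omega
    | succ n ih =>
      intro _
      rcases Nat.lt_or_ge n 1 with hn | hn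
      · interval_cases n
        norm_num
      · have hlt := inv_succ_lt_inv hn
        have hmid : (((n : ℝ) + 1)⁻¹ + ((n : ℝ))⁻¹) / 2 ∈
            Ioo (((n : ℝ) + 1)⁻¹) ((n : ℝ))⁻¹ := ⟨by linarith, by linarith⟩
        have e1 := stepB n hn _ hmid (((n : ℝ) + 1)⁻¹) ⟨le_rfl, hlt.le⟩
        have e2 := stepB n hn _ hmid (((n : ℝ))⁻¹) ⟨hlt.le, le_rfl⟩
        have hcast : (((n + 1 : ℕ)) : ℝ)⁻¹ = ((n : ℝ) + 1)⁻¹ := by push_cast; ring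
        rw [hcast, ← e1, e2]
        exact ih hn
  -- Step A : continuity at the base point
  have hbase : i (base ε hε) = φ 1 := by
    apply eq_of_uniformity_basis uniformity_hasBasis_closed
    rintro W ⟨hW, hWc⟩
    have hcont : ContinuousAt i (base ε hε) := hi.continuousAt
    have hprein : i ⁻¹' (UniformSpace.ball (i (base ε hε)) W) ∈ 𝓝 (base ε hε) :=
      hcont (UniformSpace.ball_mem_nhds _ hW)
    obtain ⟨δ, hδpos, hδ⟩ := Metric.mem_nhds_iff.1 hprein
    obtain ⟨k0, hk0⟩ := exists_nat_gt (2 / δ)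
    set k := k0 + 1 with hkdef
    have hk1 : 1 ≤ k := by omega
    have hkpos : (0:ℝ) < (k : ℝ) := by exact_mod_cast hk1
    have hkgt : 2 / δ < (k : ℝ) := by
      have hcst : (k0 : ℝ) + 1 = ((k : ℕ) : ℝ) := by simp [hkdef]
      nlinarith [hk0]
    have h2k : 2 * ((k : ℝ))⁻¹ < δ := by
      rw [div_lt_iff₀ hδpos] at hkgt
      rw [show 2 * ((k : ℝ))⁻¹ = 2 / (k : ℝ) by ring, div_lt_iff₀ hkpos]
      nlinarith
    have hdistlt : ∀ j : ℕ, dist (P ((k : ℝ))⁻¹ j) (base ε hε) < δ := by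
      intro j
      rw [Subtype.dist_eq, dist_eq_norm]
      have hik0 : (0:ℝ) ≤ ((k : ℝ))⁻¹ := by positivity
      have hik1 : ((k : ℝ))⁻¹ ≤ 1 := inv_le_one' hk1
      rw [hPval (((k : ℝ))⁻¹) hik0 hik1 j]
      have hb := norm_pt_sub_base hε (j+1) hik0
      show ‖pt ε (j+1) ((k : ℝ))⁻¹ - ε • dBasis 0‖ < δ
      linarith
    have hin : ∀ j : ℕ, (i (base ε hε), i (P ((k : ℝ))⁻¹ j)) ∈ W := fun j =>
      hδ (Metric.mem_ball.2 (hdistlt j))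
    have hlim : Tendsto (fun j => (i (base ε hε), i (P ((k : ℝ))⁻¹ j))) (U : Filter ℕ)
        (𝓝 (i (base ε hε), φ (((k : ℝ))⁻¹))) := tendsto_const_nhds.prodMk_nhds (hφ _)
    have hWmem : (i (base ε hε), φ (((k : ℝ))⁻¹)) ∈ W :=
      hWc.mem_of_tendsto hlim (Eventually.of_forall hin)
    rwa [chain k hk1] at hWmem
  -- conclude
  have hPe : (fun j : ℕ => i (P 1 j)) = (fun j : ℕ => i (eSeg j)) := by
    funext j
    congr 1
    apply Subtype.ext
    show pt ε (j+1) (cl 1) = dBasis (j+1)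
    rw [cl_of_one_le le_rfl, pt_one]
  have hres := hφ 1
  rw [hPe] at hres
  rwa [← hbase] at hres

end DF

theorem stmt_16 (K : Type*) [TopologicalSpace K] [CompactSpace K] [T2Space K]
    [MulAction DGroup K] [ContinuousSMul DGroup K]
    (i : ↥DoubleFan → K) (hi : Continuous i)
    (heq : ∀ (g : DGroup) (x : ↥DoubleFan),
      i ((g : ↥DoubleFan ≃ₜ ↥DoubleFan) x) = g • i x)
    (hd : DenseRange i) :
    i dPlus = i dMinus ∧ ¬ Function.Injective i := by
  letI : UniformSpace K := uniformSpaceOfCompactR1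
  have h1 := DF.key i hi heq (Or.inl rfl : (1:ℝ) = 1 ∨ (1:ℝ) = -1)
  have h2 := DF.key i hi heq (Or.inr rfl : (-1:ℝ) = 1 ∨ (-1:ℝ) = -1)
  have hlimeq : i (DF.base 1 (Or.inl rfl)) = i (DF.base (-1) (Or.inr rfl)) :=
    tendsto_nhds_unique h1 h2
  have hbp : DF.base 1 (Or.inl rfl) = dPlus := Subtype.ext (one_smul ℝ (dBasis 0))
  have hbm : DF.base (-1) (Or.inr rfl) = dMinus := Subtype.ext (neg_one_smul ℝ (dBasis 0))
  have hmain : i dPlus = i dMinus := by rw [← hbp, ← hbm]; exact hlimeq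
  refine ⟨hmain, ?_⟩
  intro hinj
  have heqpts := hinj hmain
  have h0 := congrArg (fun x : ↥DoubleFan => (x : DFanAmbient) 0) heqpts
  simp only [dPlus, dMinus] at h0
  rw [lp.coeFn_neg] at h0
  simp only [Pi.neg_apply] at h0
  rw [DF.dBasis_apply_self 0] at h0
  norm_num at h0
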